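/- For every sequence U₁, U₂, … of open sets in π₁^top(HE,p) each containing the class [P] of the constant loop, there exists for each n an integer m_n > 1 such that the loop f_n = (α₁ * α_{m_n} * α₁⁻¹ * α_{m_n}⁻¹)^n lies in Π⁻¹(U_n), where α_i denotes a loop traversing the i-th circle X_i once. -/

import Mathlib

open unitInterval Filter Topology

noncomputable section

/-- The `n`-th circle of the Hawaiian earring: radius `1/n`, centre `(1/n, 0)`.
(For `n = 0` this degenerates to the single point `(0,0)` since `1/0 = 0` in Lean.) -/
def circ (n : ℕ) : Set (ℝ × ℝ) :=
  {x | (x.1 - 1 / n) ^ 2 + x.2 ^ 2 = (1 / n) ^ 2}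

/-- The Hawaiian earring as a subset of the plane. -/
def HEset : Set (ℝ × ℝ) := ⋃ n : ℕ, circ n

/-- The Hawaiian earring as a topological (metric) space. -/
abbrev HE : Type := ↥HEset

lemma origin_mem_circ (n : ℕ) : ((0, 0) : ℝ × ℝ) ∈ circ n := by
  simp [circ]

/-- The basepoint `p = (0,0)` of the Hawaiian earring. -/
def hep : HE := ⟨(0, 0), Set.mem_iUnion.2 ⟨1, origin_mem_circ 1⟩⟩

/-- The point `q = (2,0)` on the largest circle `X₁`, distinct from `p`. -/
def qpt : HE := ⟨(2, 0), Set.mem_iUnion.2 ⟨1, by norm_num [circ]⟩⟩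

/-- The standard parametrisation of the `i`-th circle, starting and ending at the origin. -/
def alphaFun (i : ℕ) (t : ℝ) : ℝ × ℝ :=
  ((1 / i) * (1 - Real.cos (2 * Real.pi * t)), (1 / i) * Real.sin (2 * Real.pi * t))

lemma alphaFun_mem (i : ℕ) (t : ℝ) : alphaFun i t ∈ HEset := by
  refine Set.mem_iUnion.2 ⟨i, ?_⟩
  have h := Real.sin_sq_add_cos_sq (2 * Real.pi * t)
  simp only [circ, alphaFun, Set.mem_setOf_eq]
  nlinarith [h]

/-- The loop `αᵢ` traversing the `i`-th circle of the Hawaiian earring once. -/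
def alpha (i : ℕ) : Path hep hep where
  toFun t := ⟨alphaFun i t, alphaFun_mem i t⟩
  continuous_toFun := by
    refine Continuous.subtype_mk ?_ _
    unfold alphaFun
    fun_prop
  source' := by
    ext : 1
    simp [alphaFun, hep]
  target' := by
    ext : 1
    simp [alphaFun, hep, Real.cos_two_pi, Real.sin_two_pi]

/-- `n`-fold concatenation of a loop with itself. -/
def loopPow {X : Type*} [TopologicalSpace X] {p : X} (γ : Path p p) : ℕ → Path p p
  | 0 => Path.refl p
  | n + 1 => (loopPow γ n).trans γ

/-- The commutator-power loops `fₙ = (α₁ * α_m * α₁⁻¹ * α_m⁻¹)ⁿ`. -/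
def fLoop (m n : ℕ) : Path hep hep :=
  loopPow ((((alpha 1).trans (alpha m)).trans (alpha 1).symm).trans (alpha m).symm) n

/-- `oscGE q g M` : there are `t₀ < t₁ < ⋯ < t_M` in `[0,1]` with `g(t_{2i}) = p`
and `g(t_{2i+1}) = q`. -/
def oscGE (q : HE) (g : I → HE) (M : ℕ) : Prop :=
  ∃ t : Fin (M + 1) → I, StrictMono t ∧ ∀ i : Fin (M + 1),
    ((i : ℕ) % 2 = 0 → g (t i) = hep) ∧ ((i : ℕ) % 2 = 1 → g (t i) = q)

/-- The oscillation number of a based loop, an element of `ℕ ∪ {∞}`. -/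
def osc (q : HE) (g : I → HE) : ℕ∞ :=
  ⨆ (M : ℕ) (_ : oscGE q g M), (M : ℕ∞)

/-- The topological fundamental group: path components of the based loop space
(with the uniform-convergence = compact-open topology), with the quotient topology. -/
def Pi1Top (X : Type*) [TopologicalSpace X] (p : X) : Type _ :=
  Quotient (pathSetoid (Path p p))

instance (X : Type*) [TopologicalSpace X] (p : X) : TopologicalSpace (Pi1Top X p) :=
  instTopologicalSpaceQuotient

/-- The canonical surjection `Π : C_p(X) → π₁^top(X,p)`. -/
def Pr {X : Type*} [TopologicalSpace X] {p : X} (γ : Path p p) : Pi1Top X p :=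
  Quotient.mk _ γ


/- ## auxiliary lemmas -/

lemma homotopic_joined {X : Type*} [TopologicalSpace X] {x y : X} {γ γ' : Path x y}
    (h : γ.Homotopic γ') : Joined γ γ' := by
  obtain ⟨H⟩ := h
  refine ⟨⟨⟨fun t => H.eval t, ?_⟩, by simp, by simp⟩⟩
  refine continuous_induced_rng.2 ?_
  refine ContinuousMap.continuous_of_continuous_uncurry _ ?_
  exact H.toHomotopy.continuous.comp (by fun_prop)

lemma alpha_zero : alpha 0 = Path.refl hep := by
  ext t : 2
  apply Subtype.ext
  simp [alpha, alphaFun, hep]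
  rfl

lemma loopPow_homotopic_refl {X : Type*} [TopologicalSpace X] {p : X} {γ : Path p p}
    (h : γ.Homotopic (Path.refl p)) (n : ℕ) : (loopPow γ n).Homotopic (Path.refl p) := by
  induction n with
  | zero => exact Path.Homotopic.refl _
  | succ n ih =>
    have := Path.Homotopic.hcomp ih h
    exact this.trans ⟨Path.Homotopy.transRefl _⟩

lemma fLoop_zero_homotopic (n : ℕ) : (fLoop 0 n).Homotopic (Path.refl hep) := by
  refine loopPow_homotopic_refl ?_ n
  rw [alpha_zero]
  have h1 : ((alpha 1).trans (Path.refl hep)).Homotopic (alpha 1) :=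
    ⟨Path.Homotopy.transRefl _⟩
  have h2 : (((alpha 1).trans (Path.refl hep)).trans (alpha 1).symm).Homotopic
      (Path.refl hep) := by
    refine (Path.Homotopic.hcomp h1 (Path.Homotopic.refl _)).trans ?_
    exact Path.Homotopic.symm ⟨Path.Homotopy.reflTransSymm (alpha 1)⟩
  have h3 := Path.Homotopic.hcomp h2 (Path.Homotopic.refl (Path.refl hep).symm)
  exact h3.trans (Path.Homotopic.symm ⟨Path.Homotopy.reflTransSymm (Path.refl hep)⟩)

lemma dist_trans {X : Type*} [MetricSpace X] {a b c : X} {γ γ' : Path a b} {δ δ' : Path b c}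
    {ε : ℝ} (hγ : ∀ s, dist (γ s) (γ' s) ≤ ε) (hδ : ∀ s, dist (δ s) (δ' s) ≤ ε) :
    ∀ t, dist ((γ.trans δ) t) ((γ'.trans δ') t) ≤ ε := by
  intro t
  rw [Path.trans_apply, Path.trans_apply]
  split_ifs
  · apply hγ
  · apply hδ

lemma dist_symm {X : Type*} [MetricSpace X] {a b : X} {γ γ' : Path a b}
    {ε : ℝ} (hγ : ∀ s, dist (γ s) (γ' s) ≤ ε) :
    ∀ t, dist ((γ.symm) t) ((γ'.symm) t) ≤ ε := by
  intro t
  simp only [Path.symm_apply, Function.comp_apply]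
  apply hγ

lemma dist_alpha (m : ℕ) : ∀ t, dist ((alpha m) t) ((alpha 0) t) ≤ 2 / m := by
  intro t
  rcases Nat.eq_zero_or_pos m with rfl | hm
  · simp
  have hmpos : (0:ℝ) < m := by exact_mod_cast hm
  rw [Subtype.dist_eq]
  simp only [alpha, Path.coe_mk_mk]
  rw [Prod.dist_eq]
  have hc := Real.neg_one_le_cos (2 * Real.pi * (t:ℝ))
  have hc' := Real.cos_le_one (2 * Real.pi * (t:ℝ))
  have hs := Real.neg_one_le_sin (2 * Real.pi * (t:ℝ))
  have hs' := Real.sin_le_one (2 * Real.pi * (t:ℝ))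
  have h0 : alphaFun 0 (t:ℝ) = (0, 0) := by simp [alphaFun]
  rw [h0]
  simp only [alphaFun, Real.dist_eq]
  have hu : (0:ℝ) < 1 / m := by positivity
  have p1 : (0:ℝ) ≤ 1/m * (1 - Real.cos (2 * Real.pi * (t:ℝ))) :=
    mul_nonneg hu.le (by linarith)
  have p2 : (0:ℝ) ≤ 1/m * (1 + Real.cos (2 * Real.pi * (t:ℝ))) :=
    mul_nonneg hu.le (by linarith)
  have p3 : (0:ℝ) ≤ 1/m * (1 - Real.sin (2 * Real.pi * (t:ℝ))) :=
    mul_nonneg hu.le (by linarith)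
  have p4 : (0:ℝ) ≤ 1/m * (1 + Real.sin (2 * Real.pi * (t:ℝ))) :=
    mul_nonneg hu.le (by linarith)
  have h2m : (2:ℝ)/m = 2*(1/m) := by ring
  rw [h2m]
  apply max_le <;> rw [abs_le] <;> constructor <;> nlinarith

lemma dist_fLoop (m n : ℕ) : ∀ t, dist ((fLoop m n) t) ((fLoop 0 n) t) ≤ 2 / m := by
  have hε : (0:ℝ) ≤ 2 / m := by positivity
  have hα1 : ∀ s, dist ((alpha 1) s) ((alpha 1) s) ≤ 2 / m := by
    intro s; simp [hε]
  have hc : ∀ t, dist (((((alpha 1).trans (alpha m)).trans (alpha 1).symm).trans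
      (alpha m).symm) t)
      (((((alpha 1).trans (alpha 0)).trans (alpha 1).symm).trans (alpha 0).symm) t) ≤ 2 / m :=
    dist_trans (dist_trans (dist_trans hα1 (dist_alpha m)) (dist_symm hα1))
      (dist_symm (dist_alpha m))
  unfold fLoop
  induction n with
  | zero => intro t; simp [loopPow, hε]
  | succ n ih => exact dist_trans ih hc

theorem stmt2 (U : ℕ → Set (Pi1Top HE hep))
    (hU : ∀ n, IsOpen (U n) ∧ Pr (Path.refl hep) ∈ U n) :
    ∀ n : ℕ, ∃ m : ℕ, 1 < m ∧ fLoop m n ∈ Pr ⁻¹' (U n) := by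
  intro n
  have hVopen : IsOpen (Pr ⁻¹' (U n) : Set (Path hep hep)) := by
    have : Continuous (Pr : Path hep hep → Pi1Top HE hep) := continuous_quotient_mk'
    exact (hU n).1.preimage this
  have hmem : fLoop 0 n ∈ Pr ⁻¹' (U n) := by
    have : Pr (fLoop 0 n) = Pr (Path.refl hep) :=
      Quotient.sound (homotopic_joined (fLoop_zero_homotopic n))
    simp only [Set.mem_preimage, this]
    exact (hU n).2
  obtain ⟨W, hWopen, hWeq⟩ := isOpen_induced_iff.1 hVopen
  have hmemW : ((fLoop 0 n : Path hep hep) : C(I, HE)) ∈ W := by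
    rw [← hWeq] at hmem; exact hmem
  obtain ⟨ε, hε, hball⟩ := Metric.isOpen_iff.1 hWopen _ hmemW
  obtain ⟨m, hm⟩ := exists_nat_gt (max 1 (2 / ε))
  have hm1 : 1 < m := by
    have := (max_lt_iff.1 hm).1; exact_mod_cast this
  have hmpos : (0:ℝ) < m := by positivity
  refine ⟨m, hm1, ?_⟩
  have hd : dist ((fLoop m n : Path hep hep) : C(I, HE)) ((fLoop 0 n : Path hep hep) : C(I, HE))
      < ε := by
    have h2 : 2 / (m:ℝ) < ε := by
      rw [div_lt_iff₀ hmpos]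
      have := (max_lt_iff.1 hm).2
      rw [div_lt_iff₀ hε] at this
      linarith [mul_comm ε (m:ℝ)]
    refine lt_of_le_of_lt ?_ h2
    rw [ContinuousMap.dist_le (by positivity)]
    intro x
    exact dist_fLoop m n x
  have : ((fLoop m n : Path hep hep) : C(I, HE)) ∈ W := hball hd
  rw [← hWeq]
  exact this

end
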